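/- arXiv:0810.3110 — 5 statements merged into one kernel-verified Lean document; each statement's English description precedes it below -/
import Mathlib

section
/- Allan–Douglas local principle: Let B be a complex unital Banach algebra with identity e and let Z be a closed subalgebra of B containing e and contained in the center of B (so Z is a commutative unital Banach algebra). For a maximal ideal ω of Z, let J_ω denote the smallest closed two-sided ideal of B containing ω. Then an element b ∈ B is invertible in B if and only if for every maximal ideal ω of Z the coset b + J_ω is invertible in the quotient algebra B/J_ω. -/
open MulOpposite

/-- If `b` has no left inverse in a complex Banach algebra `A`, then there is a closed proper
(maximal) left ideal `L` containing `b` such that every central element of `A` acts as a scalar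
on `A ⧸ L`. -/
lemma allan_aux {A : Type*} [NormedRing A] [NormedAlgebra ℂ A] [CompleteSpace A]
    (b : A) (hb : ∀ c : A, c * b ≠ 1) :
    ∃ L : Submodule A A, IsClosed (L : Set A) ∧ (1 : A) ∉ L ∧ b ∈ L ∧
      ∀ z : A, (∀ a : A, z * a = a * z) → ∃ lam : ℂ, ∀ c : A, z * c - lam • c ∈ L := by
  have hspan : Ideal.span {b} ≠ ⊤ := by
    intro h
    have h1 : (1 : A) ∈ Ideal.span {b} := h ▸ Submodule.mem_top
    rw [Ideal.span, Submodule.mem_span_singleton] at h1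
    obtain ⟨c, hc⟩ := h1
    exact hb c (by rwa [smul_eq_mul] at hc)
  obtain ⟨L, hLmax, hbL⟩ := Ideal.exists_le_maximal (Ideal.span {b}) hspan
  have hcoatom : IsCoatom L := Ideal.isMaximal_def.1 hLmax
  have hbmem : b ∈ L := hbL (Ideal.subset_span rfl)
  have hL1 : (1 : A) ∉ L := fun h => hLmax.ne_top ((Ideal.eq_top_iff_one L).2 h)
  -- L is closed
  have h1c : (1 : A) ∉ closure (L : Set A) := by
    intro h
    rcases Metric.mem_closure_iff.1 h 1 one_pos with ⟨x, hxL, hdist⟩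
    have hn : ‖1 - x‖ < 1 := by rwa [dist_eq_norm] at hdist
    have hx : IsUnit (1 - (1 - x)) := (Units.oneSub (1 - x) hn).isUnit
    rw [sub_sub_cancel] at hx
    obtain ⟨u, hu⟩ := hx
    have : (1 : A) ∈ L := by
      have := L.smul_mem (↑u⁻¹ : A) hxL
      rwa [smul_eq_mul, ← hu, Units.inv_mul] at this
    exact hL1 this
  have hLclosed : IsClosed (L : Set A) := by
    have hle : L ≤ L.topologicalClosure := Submodule.le_topologicalClosure L
    rcases eq_or_lt_of_le hle with heq | hlt
    · have : IsClosed ((L.topologicalClosure : Submodule A A) : Set A) :=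
        Submodule.isClosed_topologicalClosure L
      rwa [← heq] at this
    · exfalso
      have htop := hcoatom.2 _ hlt
      exact h1c (htop ▸ Submodule.mem_top : (1 : A) ∈ L.topologicalClosure)
  haveI hLc' : IsClosed (L : Set A) := hLclosed
  refine ⟨L, hLclosed, hL1, hbmem, ?_⟩
  intro z hz
  haveI : Nontrivial (A ⧸ (L : Submodule A A)) :=
    Submodule.Quotient.nontrivial_iff.2 hLmax.ne_top
  -- multiplication by z as a continuous linear map on A ⧸ L
  let T : (A ⧸ (L : Submodule A A)) →ₗ[ℂ] (A ⧸ (L : Submodule A A)) :=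
    { toFun := fun m => z • m
      map_add' := fun m n => smul_add z m n
      map_smul' := fun μ m => by
        obtain ⟨c, rfl⟩ := Submodule.Quotient.mk_surjective _ m
        show z • (Submodule.Quotient.mk (μ • c) : A ⧸ (L : Submodule A A))
          = μ • (z • Submodule.Quotient.mk c)
        rw [← Submodule.Quotient.mk_smul, ← Submodule.Quotient.mk_smul,
          ← Submodule.Quotient.mk_smul]
        congr 1
        simp only [smul_eq_mul]
        exact mul_smul_comm μ z c }
  have hbound : ∀ m : A ⧸ (L : Submodule A A), ‖T m‖ ≤ ‖z‖ * ‖m‖ := by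
    intro m
    refine le_of_forall_pos_le_add fun ε hε => ?_
    have hε' : 0 < ε / (‖z‖ + 1) := by positivity
    obtain ⟨c, hc, hlt⟩ := Submodule.Quotient.norm_mk_lt m hε'
    have hTm : T m = Submodule.Quotient.mk (z * c) := by
      rw [← hc]
      show z • (Submodule.Quotient.mk c : A ⧸ (L : Submodule A A))
        = (Submodule.Quotient.mk (z * c) : A ⧸ (L : Submodule A A))
      rw [← Submodule.Quotient.mk_smul]
      congr 1
    calc ‖T m‖ = ‖(Submodule.Quotient.mk (z * c) : A ⧸ (L : Submodule A A))‖ := by rw [hTm]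
      _ ≤ ‖z * c‖ := Submodule.Quotient.norm_mk_le _ _
      _ ≤ ‖z‖ * ‖c‖ := norm_mul_le z c
      _ ≤ ‖z‖ * (‖m‖ + ε / (‖z‖ + 1)) := mul_le_mul_of_nonneg_left hlt.le (norm_nonneg z)
      _ = ‖z‖ * ‖m‖ + ‖z‖ * (ε / (‖z‖ + 1)) := by ring
      _ ≤ ‖z‖ * ‖m‖ + ε := by
          have h1 : ‖z‖ * (ε / (‖z‖ + 1)) ≤ ε := by
            rw [div_eq_inv_mul, ← mul_assoc]
            have h2 : ‖z‖ * (‖z‖ + 1)⁻¹ ≤ 1 := by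
              rw [mul_inv_le_iff₀ (by positivity), one_mul]
              linarith [norm_nonneg z]
            nlinarith [hε.le]
          linarith
  let Tc : (A ⧸ (L : Submodule A A)) →L[ℂ] (A ⧸ (L : Submodule A A)) :=
    T.mkContinuous ‖z‖ hbound
  obtain ⟨lam, hlam⟩ := spectrum.nonempty Tc
  refine ⟨lam, fun c => ?_⟩
  -- Schur's lemma
  haveI : IsSimpleModule A (A ⧸ (L : Submodule A A)) := isSimpleModule_iff_isCoatom.2 hcoatom
  set w : A := algebraMap ℂ A lam - z with hw
  have hwc : ∀ a : A, w * a = a * w := by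
    intro a
    simp only [hw, sub_mul, mul_sub, hz a, Algebra.commutes]
  let φ : (A ⧸ (L : Submodule A A)) →ₗ[A] (A ⧸ (L : Submodule A A)) :=
    { toFun := fun m => w • m
      map_add' := fun m n => smul_add w m n
      map_smul' := fun a m => by
        obtain ⟨c, rfl⟩ := Submodule.Quotient.mk_surjective _ m
        show w • ((a • Submodule.Quotient.mk c : A ⧸ (L : Submodule A A)))
          = a • (w • Submodule.Quotient.mk c)
        rw [← Submodule.Quotient.mk_smul, ← Submodule.Quotient.mk_smul,
          ← Submodule.Quotient.mk_smul]
        congr 1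
        simp only [smul_eq_mul, ← mul_assoc, hwc a] }
  have hfun : ∀ m, (algebraMap ℂ ((A ⧸ (L : Submodule A A)) →L[ℂ] (A ⧸ (L : Submodule A A))) lam
      - Tc) m = φ m := by
    intro m
    have h1 : (algebraMap ℂ ((A ⧸ (L : Submodule A A)) →L[ℂ] (A ⧸ (L : Submodule A A))) lam) m
        = lam • m := by
      rw [Algebra.algebraMap_eq_smul_one]
      simp
    rw [ContinuousLinearMap.sub_apply, h1]
    show lam • m - z • m = w • m
    rw [hw, sub_smul, algebraMap_smul]
  rcases φ.bijective_or_eq_zero with hbij | h0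
  · exfalso
    rw [spectrum.mem_iff] at hlam
    apply hlam
    rw [ContinuousLinearMap.isUnit_iff_bijective]
    have heq : ⇑(algebraMap ℂ ((A ⧸ (L : Submodule A A)) →L[ℂ] (A ⧸ (L : Submodule A A))) lam
        - Tc) = ⇑φ := funext hfun
    rw [heq]
    exact hbij
  · have h0' : φ (Submodule.Quotient.mk c) = 0 := by rw [h0]; rfl
    have hmem : w * c ∈ L := by
      have hq : (Submodule.Quotient.mk (w • c) : A ⧸ (L : Submodule A A)) = 0 := by
        rw [Submodule.Quotient.mk_smul]; exact h0'
      rw [Submodule.Quotient.mk_eq_zero] at hq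
      rwa [smul_eq_mul] at hq
    have heq2 : z * c - lam • c = -(w * c) := by
      rw [hw, sub_mul, neg_sub, Algebra.smul_def]
    rw [heq2]
    exact L.neg_mem hmem

/-- From the scalar-action property one can build a character, whose kernel is a maximal ideal
`ω` with `g r * c ∈ L` for all `r ∈ ω`. -/
lemma allan_char {A : Type*} [NormedRing A] [NormedAlgebra ℂ A]
    {R : Type*} [Ring R] [Algebra ℂ R]
    (g : R → A) (hg1 : g 1 = 1) (hgadd : ∀ x y, g (x + y) = g x + g y)
    (hgmul : ∀ x y, g (x * y) = g x * g y) (hgsmul : ∀ (μ : ℂ) (x : R), g (μ • x) = μ • g x)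
    (L : Submodule A A) (h1 : (1 : A) ∉ L)
    (hex : ∀ z : A, (∀ a, z * a = a * z) → ∃ lam : ℂ, ∀ c, z * c - lam • c ∈ L)
    (hgc : ∀ x a, g x * a = a * g x) :
    ∃ ω : Ideal R, ω.IsMaximal ∧ ∀ r ∈ ω, ∀ c : A, g r * c ∈ L := by
  have hsmul_mem : ∀ (μ : ℂ) (x : A), x ∈ L → μ • x ∈ L := by
    intro μ x hx
    have := L.smul_mem (algebraMap ℂ A μ) hx
    rwa [smul_eq_mul, ← Algebra.smul_def] at this
  have uniq : ∀ z : A, ∀ l1 l2 : ℂ, (∀ c, z * c - l1 • c ∈ L) → (∀ c, z * c - l2 • c ∈ L) →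
      l1 = l2 := by
    intro z l1 l2 hl1 hl2
    by_contra hne
    have hd : l2 - l1 ≠ 0 := sub_ne_zero.2 (Ne.symm hne)
    have hmem : (l2 - l1) • (1 : A) ∈ L := by
      have := L.sub_mem (hl1 1) (hl2 1)
      rwa [sub_sub_sub_cancel_left, ← sub_smul] at this
    have : (1 : A) ∈ L := by
      have h2 := hsmul_mem (l2 - l1)⁻¹ _ hmem
      rwa [smul_smul, inv_mul_cancel₀ hd, one_smul] at h2
    exact h1 this
  have hexg : ∀ r : R, ∃ lam : ℂ, ∀ c, g r * c - lam • c ∈ L := fun r => hex (g r) (hgc r)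
  let χf : R → ℂ := fun r => (hexg r).choose
  have hχ : ∀ r : R, ∀ c : A, g r * c - χf r • c ∈ L := fun r => (hexg r).choose_spec
  have hχ_eq : ∀ (r : R) (l : ℂ), (∀ c, g r * c - l • c ∈ L) → χf r = l :=
    fun r l h => uniq (g r) (χf r) l (hχ r) h
  have hg0 : g 0 = 0 := by
    have h := hgadd 0 0
    rw [add_zero] at h
    exact (left_eq_add.1 h)
  have hχ1 : χf 1 = 1 := hχ_eq 1 1 (by
    intro c; rw [hg1, one_mul, one_smul, sub_self]; exact L.zero_mem)
  have hχ0 : χf 0 = 0 := hχ_eq 0 0 (by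
    intro c; rw [hg0, zero_mul, zero_smul, sub_zero]; exact L.zero_mem)
  have hχadd : ∀ x y, χf (x + y) = χf x + χf y := by
    intro x y
    refine hχ_eq _ _ fun c => ?_
    have hs := L.add_mem (hχ x c) (hχ y c)
    rw [hgadd, add_mul, add_smul]
    convert hs using 1
    abel
  have hχmul : ∀ x y, χf (x * y) = χf x * χf y := by
    intro x y
    refine hχ_eq _ _ fun c => ?_
    have h1' := L.smul_mem (g x) (hχ y c)
    have h2' := hsmul_mem (χf y) _ (hχ x c)
    have hs := L.add_mem h1' h2'
    rw [hgmul]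
    convert hs using 1
    rw [smul_eq_mul, mul_sub, smul_sub, mul_smul_comm, smul_smul, mul_assoc,
      mul_comm (χf x) (χf y)]
    abel
  let χ : R →+* ℂ :=
    { toFun := χf, map_one' := hχ1, map_mul' := hχmul, map_zero' := hχ0, map_add' := hχadd }
  have hsurj : Function.Surjective χ := by
    intro μ
    refine ⟨algebraMap ℂ R μ, hχ_eq _ _ fun c => ?_⟩
    have hg : g (algebraMap ℂ R μ) = μ • (1 : A) := by
      rw [Algebra.algebraMap_eq_smul_one, hgsmul, hg1]
    rw [hg, smul_mul_assoc, one_mul, sub_self]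
    exact L.zero_mem
  refine ⟨RingHom.ker χ, RingHom.ker_isMaximal_of_surjective χ hsurj, ?_⟩
  intro r hr c
  have h0 : χf r = 0 := RingHom.mem_ker.1 hr
  have hx := hχ r c
  rwa [h0, zero_smul, sub_zero] at hx

/-- **Allan–Douglas local principle.** Let `B` be a complex unital Banach algebra and
`Z` a closed subalgebra of `B` contained in the center of `B` (it automatically contains
the identity, being a subalgebra). For a maximal ideal `ω` of `Z`, let `J ω` be the smallest
closed two-sided ideal of `B` containing (the image in `B` of) `ω`. Then `b : B` is invertible
in `B` if and only if for every maximal ideal `ω` of `Z` the coset of `b` is invertible in the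
quotient algebra `B / J ω`. -/
theorem allan_douglas_local_principle
    {B : Type*} [NormedRing B] [NormedAlgebra ℂ B] [CompleteSpace B]
    (Z : Subalgebra ℂ B) (hZclosed : IsClosed (Z : Set B))
    (hZcentral : ∀ z ∈ Z, ∀ b : B, z * b = b * z)
    (J : Ideal Z → TwoSidedIdeal B)
    (hJ : ∀ ω : Ideal Z,
      J ω = sInf {I : TwoSidedIdeal B |
        IsClosed (I : Set B) ∧ ∀ z : Z, z ∈ ω → (z : B) ∈ I})
    (b : B) :
    IsUnit b ↔ ∀ ω : Ideal Z, ω.IsMaximal → IsUnit ((J ω).ringCon.mk' b) := by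
  constructor
  · intro hb ω _
    exact hb.map ((J ω).ringCon.mk')
  · intro h
    by_contra hnb
    have hLR : (∀ c : B, c * b ≠ 1) ∨ (∀ c : B, b * c ≠ 1) := by
      by_contra hcon
      push_neg at hcon
      obtain ⟨⟨c, hc⟩, ⟨d, hd⟩⟩ := hcon
      apply hnb
      have hcd : c = d := by
        calc c = c * (b * d) := by rw [hd, mul_one]
          _ = (c * b) * d := by rw [mul_assoc]
          _ = d := by rw [hc, one_mul]
      exact ⟨⟨b, d, hd, by rw [← hcd]; exact hc⟩, rfl⟩
    rcases hLR with h1 | h1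
    · -- no left inverse
      obtain ⟨L, hLc, hL1, hbL, hex⟩ := allan_aux b h1
      obtain ⟨ω, hωmax, hω⟩ := allan_char (R := Z) (fun z => (z : B)) rfl
        (fun _ _ => rfl) (fun _ _ => rfl) (fun _ _ => rfl) L hL1 hex
        (fun x a => hZcentral _ x.2 a)
      -- the two-sided ideal
      set I₀ : TwoSidedIdeal B := TwoSidedIdeal.mk' {x : B | ∀ c : B, x * c ∈ L}
        (fun c => by rw [zero_mul]; exact L.zero_mem)
        (fun hx hy c => by rw [add_mul]; exact L.add_mem (hx c) (hy c))
        (fun hx c => by rw [neg_mul]; exact L.neg_mem (hx c))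
        (fun {x y} hy c => by
          rw [mul_assoc]
          have := L.smul_mem x (hy c)
          rwa [smul_eq_mul] at this)
        (fun {x y} hx c => by rw [mul_assoc]; exact hx (y * c)) with hI₀
      have hI₀closed : IsClosed (I₀ : Set B) := by
        rw [hI₀, TwoSidedIdeal.coe_mk']
        have : {x : B | ∀ c : B, x * c ∈ L} = ⋂ c : B, (fun x => x * c) ⁻¹' (L : Set B) := by
          ext x; simp [Set.mem_iInter]
        rw [this]
        exact isClosed_iInter fun c => hLc.preimage (continuous_mul_right c)
      have hJle : J ω ≤ I₀ := by
        rw [hJ]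
        refine sInf_le ⟨hI₀closed, fun z hz => ?_⟩
        rw [hI₀, TwoSidedIdeal.mem_mk']
        exact fun c => hω z hz c
      obtain ⟨u, hu⟩ := h ω hωmax
      obtain ⟨c, hc⟩ := Quot.exists_rep ((↑(u⁻¹) : (J ω).ringCon.Quotient))
      have hc' : (J ω).ringCon.mk' c = ↑(u⁻¹) := hc
      have hcb : (J ω).ringCon.mk' (c * b) = (J ω).ringCon.mk' 1 := by
        rw [map_mul, map_one, hc', ← hu, Units.inv_mul]
      have hrel : (J ω).ringCon (c * b) 1 := (RingCon.eq _).1 hcb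
      have hmemJ : c * b - 1 ∈ J ω := ((J ω).rel_iff _ _).1 hrel
      have hmemI : c * b - 1 ∈ I₀ := hJle hmemJ
      rw [hI₀, TwoSidedIdeal.mem_mk'] at hmemI
      have hmemL : c * b - 1 ∈ L := by
        have := hmemI 1
        rwa [mul_one] at this
      have hcbL : c * b ∈ L := by
        have := L.smul_mem c hbL
        rwa [smul_eq_mul] at this
      have : (1 : B) ∈ L := by
        have := L.sub_mem hcbL hmemL
        rwa [sub_sub_cancel] at this
      exact hL1 this
    · -- no right inverse: work in the opposite algebra
      have h1' : ∀ c : Bᵐᵒᵖ, c * op b ≠ 1 := by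
        intro c hc
        apply h1 (unop c)
        have := congrArg unop hc
        simpa using this
      obtain ⟨L, hLc, hL1, hbL, hex⟩ := allan_aux (op b) h1'
      obtain ⟨ω, hωmax, hω⟩ := allan_char (R := Z) (fun z => op (z : B)) (by simp)
        (fun x y => by push_cast; rw [op_add])
        (fun x y => by
          have hxy : ((x * y : Z) : B) = (y : B) * (x : B) := by
            push_cast
            exact hZcentral _ x.2 _
          show op ((x * y : Z) : B) = op (x : B) * op (y : B)
          rw [hxy, op_mul])
        (fun μ x => by
          show op ((μ • x : Z) : B) = μ • op (x : B)
          have hmu : ((μ • x : Z) : B) = μ • (x : B) := rfl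
          rw [hmu, op_smul])
        L hL1 hex
        (fun x a => by
          rw [← op_unop a, ← op_mul, ← op_mul, hZcentral _ x.2])
      set I₀ : TwoSidedIdeal B := TwoSidedIdeal.mk' {x : B | ∀ c : Bᵐᵒᵖ, op x * c ∈ L}
        (fun c => by rw [op_zero, zero_mul]; exact L.zero_mem)
        (fun hx hy c => by rw [op_add, add_mul]; exact L.add_mem (hx c) (hy c))
        (fun hx c => by rw [op_neg, neg_mul]; exact L.neg_mem (hx c))
        (fun {x y} hy c => by rw [op_mul, mul_assoc]; exact hy (op x * c))
        (fun {x y} hx c => by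
          rw [op_mul, mul_assoc]
          have := L.smul_mem (op y) (hx c)
          rwa [smul_eq_mul] at this) with hI₀
      have hI₀closed : IsClosed (I₀ : Set B) := by
        rw [hI₀, TwoSidedIdeal.coe_mk']
        have : {x : B | ∀ c : Bᵐᵒᵖ, op x * c ∈ L}
            = ⋂ c : Bᵐᵒᵖ, (fun x : B => op x * c) ⁻¹' (L : Set Bᵐᵒᵖ) := by
          ext x; simp [Set.mem_iInter]
        rw [this]
        exact isClosed_iInter fun c =>
          hLc.preimage ((continuous_mul_right c).comp MulOpposite.continuous_op)
      have hJle : J ω ≤ I₀ := by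
        rw [hJ]
        refine sInf_le ⟨hI₀closed, fun z hz => ?_⟩
        rw [hI₀, TwoSidedIdeal.mem_mk']
        exact fun c => hω z hz c
      obtain ⟨u, hu⟩ := h ω hωmax
      obtain ⟨d, hd⟩ := Quot.exists_rep ((↑(u⁻¹) : (J ω).ringCon.Quotient))
      have hd' : (J ω).ringCon.mk' d = ↑(u⁻¹) := hd
      have hbd : (J ω).ringCon.mk' (b * d) = (J ω).ringCon.mk' 1 := by
        rw [map_mul, map_one, hd', ← hu, Units.mul_inv]
      have hrel : (J ω).ringCon (b * d) 1 := (RingCon.eq _).1 hbd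
      have hmemJ : b * d - 1 ∈ J ω := ((J ω).rel_iff _ _).1 hrel
      have hmemI : b * d - 1 ∈ I₀ := hJle hmemJ
      rw [hI₀, TwoSidedIdeal.mem_mk'] at hmemI
      have hmemL : op (b * d) - 1 ∈ L := by
        have := hmemI 1
        rwa [mul_one, op_sub, op_one] at this
      have hbdL : op (b * d) ∈ L := by
        have := L.smul_mem (op d) hbL
        rwa [smul_eq_mul, ← op_mul] at this
      have : (1 : Bᵐᵒᵖ) ∈ L := by
        have := L.sub_mem hbdL hmemL
        rwa [sub_sub_cancel] at this
      exact hL1 this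
end

section
/- If α(x) = β(x) = δx for all x ∈ ℝ, where δ is a real number, then the leaf coincides with the logarithmic double spiral: for distinct complex numbers z₁ ≠ z₂ and real p > 1, L(z₁,z₂;p,α,β) = S(z₁,z₂;p,δ). -/
/-- The Möbius transform `M_{z₁,z₂}(ζ) = (z₂ ζ - z₁)/(ζ - 1)`. -/
noncomputable def moebius (z₁ z₂ ζ : ℂ) : ℂ := (z₂ * ζ - z₁) / (ζ - 1)

/-- The set `Y(p, α, β) = {γ = x + iy : 1/p + α(x) ≤ y ≤ 1/p + β(x)}`. -/
def Yset (p : ℝ) (α β : ℝ → ℝ) : Set ℂ :=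
  {γ : ℂ | 1 / p + α γ.re ≤ γ.im ∧ γ.im ≤ 1 / p + β γ.re}

/-- The leaf `𝓛(z₁, z₂; p, α, β) = {M_{z₁,z₂}(e^{2πγ}) : γ ∈ Y(p,α,β)} ∪ {z₁, z₂}`. -/
noncomputable def leaf (z₁ z₂ : ℂ) (p : ℝ) (α β : ℝ → ℝ) : Set ℂ :=
  ((fun γ : ℂ => moebius z₁ z₂ (Complex.exp (2 * Real.pi * γ))) '' Yset p α β) ∪ {z₁, z₂}

/-- The circular arc `𝒜(z₁, z₂; p)`: the points `z ∉ {z₁, z₂}` such that (some value of)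
`arg ((z - z₁)/(z - z₂))` is congruent to `2π/p` modulo `2π`, together with `z₁` and `z₂`. -/
noncomputable def circularArc (z₁ z₂ : ℂ) (p : ℝ) : Set ℂ :=
  {z : ℂ | z ≠ z₁ ∧ z ≠ z₂ ∧
    ∃ k : ℤ, Complex.arg ((z - z₁) / (z - z₂)) = 2 * Real.pi / p + 2 * Real.pi * k} ∪ {z₁, z₂}

/-- The logarithmic double spiral `𝒮(z₁, z₂; p, δ)`: the points `z ∉ {z₁, z₂}` such that
`arg ((z - z₁)/(z - z₂)) - δ log |(z - z₁)/(z - z₂)|` is congruent to `2π/p` modulo `2π`,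
together with `z₁` and `z₂`. -/
noncomputable def logSpiral (z₁ z₂ : ℂ) (p δ : ℝ) : Set ℂ :=
  {z : ℂ | z ≠ z₁ ∧ z ≠ z₂ ∧
    ∃ k : ℤ, Complex.arg ((z - z₁) / (z - z₂)) -
        δ * Real.log ‖(z - z₁) / (z - z₂)‖ =
      2 * Real.pi / p + 2 * Real.pi * k} ∪ {z₁, z₂}

lemma moebius_ratio (z₁ z₂ ζ : ℂ) (hz : z₁ ≠ z₂) (h0 : ζ ≠ 0) (h1 : ζ ≠ 1) :
    moebius z₁ z₂ ζ ≠ z₁ ∧ moebius z₁ z₂ ζ ≠ z₂ ∧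
      (moebius z₁ z₂ ζ - z₁) / (moebius z₁ z₂ ζ - z₂) = ζ := by
  have hd : ζ - 1 ≠ 0 := sub_ne_zero.mpr h1
  have hzz : z₂ - z₁ ≠ 0 := sub_ne_zero.mpr hz.symm
  have h1' : moebius z₁ z₂ ζ - z₁ = ζ * (z₂ - z₁) / (ζ - 1) := by
    unfold moebius; field_simp; ring
  have h2' : moebius z₁ z₂ ζ - z₂ = (z₂ - z₁) / (ζ - 1) := by
    unfold moebius; field_simp; ring
  refine ⟨sub_ne_zero.mp ?_, sub_ne_zero.mp ?_, ?_⟩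
  · rw [h1']; exact div_ne_zero (mul_ne_zero h0 hzz) hd
  · rw [h2']; exact div_ne_zero hzz hd
  · rw [h1', h2']; field_simp

lemma moebius_inv (z₁ z₂ z : ℂ) (hz : z₁ ≠ z₂) (h1 : z ≠ z₁) (h2 : z ≠ z₂) :
    moebius z₁ z₂ ((z - z₁) / (z - z₂)) = z := by
  have hd2 : z - z₂ ≠ 0 := sub_ne_zero.mpr h2
  have hden : (z - z₁) / (z - z₂) - 1 ≠ 0 := by
    rw [div_sub_one hd2]
    exact div_ne_zero (by rw [sub_sub_sub_cancel_left]; exact sub_ne_zero.mpr hz.symm) hd2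
  unfold moebius
  rw [div_eq_iff hden]
  field_simp
  ring

lemma exp_two_pi_decomp (γ : ℂ) :
    (∃ n : ℤ, Complex.arg (Complex.exp (2 * Real.pi * γ)) = 2 * Real.pi * γ.im - 2 * Real.pi * n) ∧
      ‖Complex.exp (2 * Real.pi * γ)‖ = Real.exp (2 * Real.pi * γ.re) := by
  have habs : ‖Complex.exp (2 * Real.pi * γ)‖ = Real.exp (2 * Real.pi * γ.re) := by
    rw [Complex.norm_exp]; congr 1; simp [Complex.mul_re]
  refine ⟨?_, habs⟩
  set ζ := Complex.exp (2 * Real.pi * γ) with hζ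
  have hsplit : ζ = (Real.exp (2 * Real.pi * γ.re) : ℂ) * Complex.exp ((2 * Real.pi * γ.im : ℝ) * Complex.I) := by
    rw [hζ, Complex.ofReal_exp, ← Complex.exp_add]
    congr 1
    rw [← Complex.re_add_im γ]
    push_cast
    ring_nf
    simp [Complex.re_add_im]
    ring
  have hpol := Complex.norm_mul_exp_arg_mul_I ζ
  rw [habs] at hpol
  have hne : ((Real.exp (2 * Real.pi * γ.re) : ℝ) : ℂ) ≠ 0 := by
    exact_mod_cast (Real.exp_pos _).ne'
  have hexps : Complex.exp ((Complex.arg ζ : ℂ) * Complex.I) = Complex.exp ((2 * Real.pi * γ.im : ℝ) * Complex.I) :=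
    mul_left_cancel₀ hne (hpol.trans hsplit)
  rw [Complex.exp_eq_exp_iff_exists_int] at hexps
  obtain ⟨n, hn⟩ := hexps
  refine ⟨-n, ?_⟩
  have h1 : ((Complex.arg ζ : ℂ)) * Complex.I = ((2 * Real.pi * γ.im + n * (2 * Real.pi) : ℝ) : ℂ) * Complex.I := by
    rw [hn]; push_cast; ring
  have h3 : Complex.arg ζ = 2 * Real.pi * γ.im + n * (2 * Real.pi) := by
    exact_mod_cast mul_right_cancel₀ Complex.I_ne_zero h1
  rw [h3]; push_cast; ring


/-- If `α(x) = β(x) = δ x`, the leaf `𝓛(z₁, z₂; p, α, β)` is the logarithmic double spiral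
`𝒮(z₁, z₂; p, δ)`. -/
theorem leaf_eq_logSpiral (z₁ z₂ : ℂ) (hz : z₁ ≠ z₂) (p : ℝ) (hp : 1 < p) (δ : ℝ) :
    leaf z₁ z₂ p (fun x => δ * x) (fun x => δ * x) = logSpiral z₁ z₂ p δ := by
  have hπ : (0:ℝ) < Real.pi := Real.pi_pos
  have h2π : (2 * Real.pi) ≠ 0 := by positivity
  have hp0 : (0:ℝ) < 1 / p := by positivity
  have hp1 : 1 / p < 1 := by
    rw [div_lt_one (by linarith)]; linarith
  ext z
  constructor
  · rintro (⟨γ, hγ, rfl⟩ | h)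
    · obtain ⟨hle, hge⟩ := hγ
      have hy : γ.im = 1 / p + δ * γ.re := le_antisymm hge hle
      set ζ := Complex.exp (2 * Real.pi * γ) with hζdef
      have h0 : ζ ≠ 0 := Complex.exp_ne_zero _
      have h1 : ζ ≠ 1 := by
        intro habs1
        rw [hζdef, Complex.exp_eq_one_iff] at habs1
        obtain ⟨n, hn⟩ := habs1
        have hγeq : γ = (n : ℂ) * Complex.I := by
          have h2πc : (2 * (Real.pi : ℂ)) ≠ 0 := by
            simp [Real.pi_ne_zero]
          apply mul_left_cancel₀ h2πc
          rw [show (2 * (Real.pi:ℂ)) * ((n:ℂ) * Complex.I) = (n:ℂ) * (2 * Real.pi * Complex.I) by ring]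
          exact_mod_cast hn
        have hre : γ.re = 0 := by rw [hγeq]; simp
        have him : γ.im = (n : ℝ) := by rw [hγeq]; simp
        rw [hre, him, mul_zero, add_zero] at hy
        have hn0 : (0:ℝ) < (n:ℝ) := by rw [hy]; exact hp0
        have hn1 : (n:ℝ) < 1 := by rw [hy]; exact hp1
        have : (0:ℤ) < n := by exact_mod_cast hn0
        have : n < 1 := by exact_mod_cast hn1
        omega
      obtain ⟨hne1, hne2, hratio⟩ := moebius_ratio z₁ z₂ ζ hz h0 h1
      obtain ⟨⟨n, harg⟩, habs⟩ := exp_two_pi_decomp γ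
      left
      refine ⟨hne1, hne2, -n, ?_⟩
      rw [hratio, harg, habs, Real.log_exp, hy]
      push_cast
      field_simp
      ring
    · right; exact h
  · rintro (⟨h1, h2, k, hk⟩ | h)
    · set ζ := (z - z₁) / (z - z₂) with hζdef
      have hd1 : z - z₁ ≠ 0 := sub_ne_zero.mpr h1
      have hd2 : z - z₂ ≠ 0 := sub_ne_zero.mpr h2
      have h0 : ζ ≠ 0 := div_ne_zero hd1 hd2
      have habs : (0:ℝ) < ‖ζ‖ := by
        simpa using (norm_pos_iff.mpr h0)
      set x : ℝ := Real.log (‖ζ‖) / (2 * Real.pi) with hxdef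
      set y : ℝ := Complex.arg ζ / (2 * Real.pi) - k with hydef
      set γ : ℂ := (x : ℂ) + (y : ℂ) * Complex.I with hγdef
      have hre : γ.re = x := by rw [hγdef]; simp
      have him : γ.im = y := by rw [hγdef]; simp
      have harg : Complex.arg ζ = 2 * Real.pi / p + 2 * Real.pi * k + δ * Real.log (‖ζ‖) := by
        linarith [hk]
      have hyeq : y = 1 / p + δ * x := by
        rw [hydef, hxdef, harg]
        field_simp
        ring
      have hexp : Complex.exp (2 * Real.pi * γ) = ζ := by
        have hx2 : 2 * Real.pi * x = Real.log (‖ζ‖) := by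
          rw [hxdef]; field_simp
        have hy2 : 2 * Real.pi * y = Complex.arg ζ - 2 * Real.pi * k := by
          rw [hydef]; field_simp
        have h2πγ : 2 * (Real.pi:ℂ) * γ = ((2 * Real.pi * x : ℝ) : ℂ) +
            ((2 * Real.pi * y : ℝ) : ℂ) * Complex.I := by
          rw [hγdef]; push_cast; ring
        rw [hx2, hy2] at h2πγ
        rw [h2πγ, Complex.exp_add]
        rw [show ((Complex.arg ζ - 2 * Real.pi * k : ℝ) : ℂ) * Complex.I =
          (Complex.arg ζ : ℂ) * Complex.I + (-k : ℤ) * (2 * Real.pi * Complex.I) by push_cast; ring]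
        rw [Complex.exp_add, Complex.exp_int_mul_two_pi_mul_I, mul_one,
          ← Complex.ofReal_exp, Real.exp_log habs]
        exact Complex.norm_mul_exp_arg_mul_I ζ
      left
      refine ⟨γ, ⟨?_, ?_⟩, ?_⟩
      · rw [hre, him, hyeq]
      · rw [hre, him, hyeq]
      · show moebius z₁ z₂ (Complex.exp (2 * Real.pi * γ)) = z
        rw [hexp, hζdef]
        exact moebius_inv z₁ z₂ z hz h1 h2
    · right; exact h
end

section
/- Let δ⁻ ≤ δ⁺ be real numbers, let α(x) := min(δ⁻x, δ⁺x), β(x) := max(δ⁻x, δ⁺x) for x ∈ ℝ, let z₁ ≠ z₂ be distinct complex numbers and p > 1 a real number, and put m := M_{z₁,z₂}(e^{2πi/p}). Then m belongs to the leaf L(z₁,z₂;p,α,β), the leaf L(z₁,z₂;p,α,β) is a connected subset of ℂ, and the point m separates the leaf, i.e. L(z₁,z₂;p,α,β) ∖ {m} is not connected. -/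
lemma moebius_sub_fst (z₁ z₂ ζ : ℂ) (h : ζ ≠ 1) :
    moebius z₁ z₂ ζ - z₁ = ζ * (z₂ - z₁) / (ζ - 1) := by
  have h' : ζ - 1 ≠ 0 := sub_ne_zero.mpr h
  rw [eq_div_iff h', sub_mul, moebius, div_mul_cancel₀ _ h']
  ring

lemma moebius_sub_snd (z₁ z₂ ζ : ℂ) (h : ζ ≠ 1) :
    moebius z₁ z₂ ζ - z₂ = (z₂ - z₁) / (ζ - 1) := by
  have h' : ζ - 1 ≠ 0 := sub_ne_zero.mpr h
  rw [eq_div_iff h', sub_mul, moebius, div_mul_cancel₀ _ h']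
  ring

lemma moebius_abs_key (z₁ z₂ ζ : ℂ) (h : ζ ≠ 1) :
    ‖moebius z₁ z₂ ζ - z₁‖ = ‖ζ‖ * ‖moebius z₁ z₂ ζ - z₂‖ := by
  rw [moebius_sub_fst _ _ _ h, moebius_sub_snd _ _ _ h, norm_div, norm_div, norm_mul]
  ring

lemma moebius_inv_form (z₁ z₂ ζ : ℂ) (h : ζ ≠ 0) :
    moebius z₁ z₂ ζ = (z₂ - z₁ * ζ⁻¹) / (1 - ζ⁻¹) := by
  have h1 : z₂ - z₁ * ζ⁻¹ = (z₂ * ζ - z₁) * ζ⁻¹ := by field_simp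
  have h2 : 1 - ζ⁻¹ = (ζ - 1) * ζ⁻¹ := by field_simp
  rw [moebius, h1, h2, mul_div_mul_right _ _ (inv_ne_zero h)]

lemma re_two_pi_mul (γ : ℂ) : (2 * (Real.pi : ℂ) * γ).re = 2 * Real.pi * γ.re := by
  simp [Complex.mul_re]

lemma abs_exp_two_pi (γ : ℂ) :
    ‖Complex.exp (2 * Real.pi * γ)‖ = Real.exp (2 * Real.pi * γ.re) := by
  rw [Complex.norm_exp, re_two_pi_mul]

lemma Yset_eq_image (δminus δplus p : ℝ) (hδ : δminus ≤ δplus) :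
    Yset p (fun x => min (δminus * x) (δplus * x)) (fun x => max (δminus * x) (δplus * x)) =
      (fun q : ℝ × ℝ => (q.1 : ℂ) + ((1 / p + q.2 * q.1 : ℝ) : ℂ) * Complex.I) ''
        (Set.univ ×ˢ Set.Icc δminus δplus) := by
  ext γ
  constructor
  · rintro ⟨h1, h2⟩
    simp only at h1 h2
    rcases lt_trichotomy γ.re 0 with hx | hx | hx
    · have hmin : min (δminus * γ.re) (δplus * γ.re) = δplus * γ.re :=
        min_eq_right (mul_le_mul_of_nonpos_right hδ hx.le)
      have hmax : max (δminus * γ.re) (δplus * γ.re) = δminus * γ.re :=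
        max_eq_left (mul_le_mul_of_nonpos_right hδ hx.le)
      rw [hmin] at h1; rw [hmax] at h2
      refine ⟨(γ.re, (γ.im - 1 / p) / γ.re), ⟨trivial, ?_, ?_⟩, ?_⟩
      · rw [le_div_iff_of_neg hx]; linarith
      · rw [div_le_iff_of_neg hx]; linarith
      · have hs : (γ.im - 1 / p) / γ.re * γ.re = γ.im - 1 / p :=
          div_mul_cancel₀ _ hx.ne
        simp only [hs]
        rw [show (1 / p + (γ.im - 1 / p) : ℝ) = γ.im by ring]
        exact Complex.re_add_im γ
    · have him : γ.im = 1 / p := by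
        rw [hx] at h1 h2; simp at h1 h2; rw [one_div]; linarith
      refine ⟨(0, δminus), ⟨trivial, le_refl _, hδ⟩, ?_⟩
      apply Complex.ext <;> simp [hx, him]
    · have hmin : min (δminus * γ.re) (δplus * γ.re) = δminus * γ.re :=
        min_eq_left (mul_le_mul_of_nonneg_right hδ hx.le)
      have hmax : max (δminus * γ.re) (δplus * γ.re) = δplus * γ.re :=
        max_eq_right (mul_le_mul_of_nonneg_right hδ hx.le)
      rw [hmin] at h1; rw [hmax] at h2
      refine ⟨(γ.re, (γ.im - 1 / p) / γ.re), ⟨trivial, ?_, ?_⟩, ?_⟩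
      · rw [le_div_iff₀ hx]; linarith
      · rw [div_le_iff₀ hx]; linarith
      · have hs : (γ.im - 1 / p) / γ.re * γ.re = γ.im - 1 / p :=
          div_mul_cancel₀ _ hx.ne'
        simp only [hs]
        rw [show (1 / p + (γ.im - 1 / p) : ℝ) = γ.im by ring]
        exact Complex.re_add_im γ
  · rintro ⟨⟨x, s⟩, ⟨-, hs1, hs2⟩, rfl⟩
    have hre : ((x : ℂ) + ((1 / p + s * x : ℝ) : ℂ) * Complex.I).re = x := by simp
    have him : ((x : ℂ) + ((1 / p + s * x : ℝ) : ℂ) * Complex.I).im = 1 / p + s * x := by simp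
    simp only [Yset, Set.mem_setOf_eq, hre, him]
    rcases le_total 0 x with h0 | h0
    · constructor
      · have := min_le_left (δminus * x) (δplus * x)
        have := mul_le_mul_of_nonneg_right hs1 h0
        linarith
      · have := le_max_right (δminus * x) (δplus * x)
        have := mul_le_mul_of_nonneg_right hs2 h0
        linarith
    · constructor
      · have := min_le_right (δminus * x) (δplus * x)
        have := mul_le_mul_of_nonpos_right hs2 h0
        linarith
      · have := le_max_left (δminus * x) (δplus * x)
        have := mul_le_mul_of_nonpos_right hs1 h0
        linarith


set_option maxHeartbeats 1000000
section
open Filter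

/-- For `α(x) = min (δ⁻ x, δ⁺ x)`, `β(x) = max (δ⁻ x, δ⁺ x)`, the point
`m := M_{z₁,z₂}(e^{2πi/p})` belongs to the leaf `𝓛(z₁, z₂; p, α, β)`, the leaf is a
connected subset of `ℂ`, and `m` separates the leaf: removing `m` disconnects it. -/
theorem leaf_median_separating_point (δminus δplus : ℝ) (hδ : δminus ≤ δplus)
    (z₁ z₂ : ℂ) (hz : z₁ ≠ z₂) (p : ℝ) (hp : 1 < p) :
    moebius z₁ z₂ (Complex.exp (2 * Real.pi * Complex.I / p)) ∈
      leaf z₁ z₂ p (fun x => min (δminus * x) (δplus * x))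
        (fun x => max (δminus * x) (δplus * x)) ∧
    IsConnected (leaf z₁ z₂ p (fun x => min (δminus * x) (δplus * x))
        (fun x => max (δminus * x) (δplus * x))) ∧
    ¬ IsPreconnected (leaf z₁ z₂ p (fun x => min (δminus * x) (δplus * x))
        (fun x => max (δminus * x) (δplus * x)) \
      {moebius z₁ z₂ (Complex.exp (2 * Real.pi * Complex.I / p))}) := by
  have hp0 : (0 : ℝ) < p := zero_lt_one.trans hp
  have hinv0 : (0 : ℝ) < 1 / p := by positivity
  have hinv1 : 1 / p < 1 := by rw [div_lt_one hp0]; exact hp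
  set α : ℝ → ℝ := fun x => min (δminus * x) (δplus * x) with hα
  set β : ℝ → ℝ := fun x => max (δminus * x) (δplus * x) with hβ
  set Y : Set ℂ := Yset p α β with hY
  set m : ℂ := moebius z₁ z₂ (Complex.exp (2 * Real.pi * Complex.I / p)) with hm
  set S₀ : Set ℂ :=
    (fun γ : ℂ => moebius z₁ z₂ (Complex.exp (2 * Real.pi * γ))) '' Y with hS₀
  have hleaf : leaf z₁ z₂ p α β = S₀ ∪ {z₁, z₂} := rfl
  -- exp (2πγ) ≠ 1 on Y
  have hne : ∀ γ ∈ Y, Complex.exp (2 * Real.pi * γ) ≠ 1 := by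
    intro γ hγ h
    rw [Complex.exp_eq_one_iff] at h
    obtain ⟨n, hn⟩ := h
    have hπ : (2 * (Real.pi : ℂ)) ≠ 0 :=
      mul_ne_zero two_ne_zero (Complex.ofReal_ne_zero.2 Real.pi_ne_zero)
    have hγ' : γ = (n : ℂ) * Complex.I := by
      apply mul_left_cancel₀ hπ
      rw [hn]; ring
    obtain ⟨h1, h2⟩ := hγ
    rw [hγ'] at h1 h2
    simp [hα, hβ] at h1 h2
    have hn0 : (0 : ℝ) < (n : ℝ) := lt_of_lt_of_le hinv0 (by simpa [one_div] using h1)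
    have hn1 : (n : ℝ) < 1 := lt_of_le_of_lt (by simpa [one_div] using h2) hinv1
    have : (0 : ℤ) < n := by exact_mod_cast hn0
    have : n < 1 := by exact_mod_cast hn1
    omega
  -- the base point γ₀
  set γ₀ : ℂ := ((1 / p : ℝ) : ℂ) * Complex.I with hγ₀
  have hre0 : γ₀.re = 0 := by simp [hγ₀]
  have him0 : γ₀.im = 1 / p := by simp [hγ₀]
  have hγ₀Y : γ₀ ∈ Y := by
    refine ⟨?_, ?_⟩ <;>
      simp [hα, hβ, hre0, him0]
  have harg : 2 * (Real.pi : ℂ) * γ₀ = 2 * Real.pi * Complex.I / p := by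
    rw [hγ₀]; push_cast; field_simp
  have hmem : m ∈ leaf z₁ z₂ p α β := Or.inl ⟨γ₀, hγ₀Y, by
    show moebius z₁ z₂ (Complex.exp (2 * Real.pi * γ₀)) = m
    rw [harg]⟩
  have hζ₀ : Complex.exp (2 * Real.pi * Complex.I / p) ≠ 1 := by
    have := hne γ₀ hγ₀Y; rwa [harg] at this
  have hζ₀0 : Complex.exp (2 * Real.pi * Complex.I / p) ≠ 0 := Complex.exp_ne_zero _
  have hsub : z₂ - z₁ ≠ 0 := sub_ne_zero.mpr hz.symm
  have hden : Complex.exp (2 * Real.pi * Complex.I / p) - 1 ≠ 0 := sub_ne_zero.mpr hζ₀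
  have hm1 : m ≠ z₁ := by
    intro h
    have h2 := moebius_sub_fst z₁ z₂ _ hζ₀
    rw [← hm, h, sub_self] at h2
    exact div_ne_zero (mul_ne_zero hζ₀0 hsub) hden h2.symm
  have hm2 : m ≠ z₂ := by
    intro h
    have h2 := moebius_sub_snd z₁ z₂ _ hζ₀
    rw [← hm, h, sub_self] at h2
    exact div_ne_zero hsub hden h2.symm
  -- connectedness of Y
  have hYconn : IsConnected Y := by
    rw [hY, hα, hβ, Yset_eq_image δminus δplus p hδ]
    refine IsConnected.image ?_ _ ?_
    · exact (isConnected_univ).prod (isConnected_Icc hδ)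
    · apply Continuous.continuousOn
      fun_prop
  have hcontOn : ContinuousOn (fun γ : ℂ => moebius z₁ z₂ (Complex.exp (2 * Real.pi * γ))) Y := by
    simp only [moebius]
    apply ContinuousOn.div
    · fun_prop
    · fun_prop
    · intro γ hγ
      exact sub_ne_zero.mpr (hne γ hγ)
  have hS₀conn : IsConnected S₀ := hYconn.image _ hcontOn
  -- paths to z₁ and z₂
  have hpath : ∀ x : ℝ, ((x : ℂ) + ((1 / p + δminus * x : ℝ) : ℂ) * Complex.I) ∈ Y := by
    intro x
    have hre : ((x : ℂ) + ((1 / p + δminus * x : ℝ) : ℂ) * Complex.I).re = x := by simp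
    have him : ((x : ℂ) + ((1 / p + δminus * x : ℝ) : ℂ) * Complex.I).im = 1 / p + δminus * x := by
      simp
    refine ⟨?_, ?_⟩
    · rw [hre, him]
      simp only [hα]
      have := min_le_left (δminus * x) (δplus * x); linarith
    · rw [hre, him]
      simp only [hβ]
      have := le_max_left (δminus * x) (δplus * x); linarith
  have hexp_tendsto : Tendsto
      (fun x : ℝ => Complex.exp (2 * Real.pi * ((x : ℂ) + ((1 / p + δminus * x : ℝ) : ℂ) * Complex.I)))
      atBot (nhds 0) := by
    rw [tendsto_zero_iff_norm_tendsto_zero]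
    have heq : ∀ x : ℝ, ‖Complex.exp (2 * Real.pi *
        ((x : ℂ) + ((1 / p + δminus * x : ℝ) : ℂ) * Complex.I))‖ = Real.exp (2 * Real.pi * x) := by
      intro x
      rw [abs_exp_two_pi]
      simp
    simp only [heq]
    exact Real.tendsto_exp_atBot.comp
      (Filter.Tendsto.const_mul_atBot (by positivity) tendsto_id)
  have hMcont : ContinuousAt (moebius z₁ z₂) 0 := by
    have : ContinuousAt (fun ζ : ℂ => (z₂ * ζ - z₁) / (ζ - 1)) 0 := by
      apply ContinuousAt.div
      · fun_prop
      · fun_prop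
      · norm_num
    exact this
  have hz₁cl : z₁ ∈ closure S₀ := by
    have hM0 : moebius z₁ z₂ 0 = z₁ := by simp [moebius]
    apply mem_closure_of_tendsto (f := fun x : ℝ =>
      moebius z₁ z₂ (Complex.exp (2 * Real.pi * ((x : ℂ) + ((1 / p + δminus * x : ℝ) : ℂ) * Complex.I))))
      (b := atBot)
    · have h := hMcont.tendsto.comp hexp_tendsto
      rw [hM0] at h
      exact h
    · filter_upwards with x
      exact ⟨_, hpath x, rfl⟩
  have hz₂cl : z₂ ∈ closure S₀ := by
    set G : ℂ → ℂ := fun w => (z₂ - z₁ * w) / (1 - w) with hG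
    have hGcont : ContinuousAt G 0 := by
      apply ContinuousAt.div
      · fun_prop
      · fun_prop
      · norm_num
    have hG0 : G 0 = z₂ := by simp [hG]
    have hw_tendsto : Tendsto
        (fun x : ℝ => (Complex.exp (2 * Real.pi *
          ((x : ℂ) + ((1 / p + δminus * x : ℝ) : ℂ) * Complex.I)))⁻¹)
        atTop (nhds 0) := by
      rw [tendsto_zero_iff_norm_tendsto_zero]
      have heq : ∀ x : ℝ, ‖(Complex.exp (2 * Real.pi *
          ((x : ℂ) + ((1 / p + δminus * x : ℝ) : ℂ) * Complex.I)))⁻¹‖ =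
          Real.exp (-(2 * Real.pi * x)) := by
        intro x
        rw [norm_inv, abs_exp_two_pi, Real.exp_neg]
        simp
      simp only [heq]
      exact Real.tendsto_exp_atBot.comp
        (Filter.tendsto_neg_atBot_iff.mpr
          (Filter.Tendsto.const_mul_atTop (by positivity) tendsto_id))
    apply mem_closure_of_tendsto (f := fun x : ℝ =>
      moebius z₁ z₂ (Complex.exp (2 * Real.pi * ((x : ℂ) + ((1 / p + δminus * x : ℝ) : ℂ) * Complex.I))))
      (b := atTop)
    · have heq : ∀ x : ℝ, moebius z₁ z₂ (Complex.exp (2 * Real.pi *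
          ((x : ℂ) + ((1 / p + δminus * x : ℝ) : ℂ) * Complex.I))) =
          G ((Complex.exp (2 * Real.pi *
            ((x : ℂ) + ((1 / p + δminus * x : ℝ) : ℂ) * Complex.I)))⁻¹) := by
        intro x
        exact moebius_inv_form _ _ _ (Complex.exp_ne_zero _)
      simp only [heq]
      have h := hGcont.tendsto.comp hw_tendsto
      rw [hG0] at h
      exact h
    · filter_upwards with x
      exact ⟨_, hpath x, rfl⟩
  have hclosure : leaf z₁ z₂ p α β ⊆ closure S₀ := by
    rw [hleaf]
    apply Set.union_subset subset_closure
    intro w hw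
    rcases hw with h | h
    · rw [h]; exact hz₁cl
    · rw [Set.mem_singleton_iff.mp h]; exact hz₂cl
  have hconn : IsConnected (leaf z₁ z₂ p α β) :=
    ⟨⟨m, hmem⟩, hS₀conn.isPreconnected.subset_closure
      (hleaf ▸ Set.subset_union_left) hclosure⟩
  refine ⟨hmem, hconn, ?_⟩
  -- disconnection
  intro hpc
  set U : Set ℂ := {w : ℂ | ‖w - z₁‖ < ‖w - z₂‖} with hU
  set V : Set ℂ := {w : ℂ | ‖w - z₂‖ < ‖w - z₁‖} with hV
  have hUopen : IsOpen U :=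
    isOpen_lt (continuous_norm.comp (continuous_sub_right z₁))
      (continuous_norm.comp (continuous_sub_right z₂))
  have hVopen : IsOpen V :=
    isOpen_lt (continuous_norm.comp (continuous_sub_right z₂))
      (continuous_norm.comp (continuous_sub_right z₁))
  have hz₁U : z₁ ∈ U := by
    simp only [hU, Set.mem_setOf_eq, sub_self, norm_zero]
    exact norm_pos_iff.mpr (sub_ne_zero.mpr hz)
  have hz₂V : z₂ ∈ V := by
    simp only [hV, Set.mem_setOf_eq, sub_self, norm_zero]
    exact norm_pos_iff.mpr (sub_ne_zero.mpr hz.symm)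
  have hcover : leaf z₁ z₂ p α β \ {m} ⊆ U ∪ V := by
    rintro w ⟨hwleaf, hwm⟩
    rw [hleaf] at hwleaf
    rcases hwleaf with ⟨γ, hγ, rfl⟩ | h
    · have hζ1 : Complex.exp (2 * Real.pi * γ) ≠ 1 := hne γ hγ
      have key := moebius_abs_key z₁ z₂ _ hζ1
      have hden' : Complex.exp (2 * Real.pi * γ) - 1 ≠ 0 := sub_ne_zero.mpr hζ1
      have hQpos : 0 < ‖moebius z₁ z₂ (Complex.exp (2 * Real.pi * γ)) - z₂‖ := by
        rw [moebius_sub_snd _ _ _ hζ1]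
        exact norm_pos_iff.mpr (div_ne_zero hsub hden')
      have habs : ‖Complex.exp (2 * Real.pi * γ)‖ = Real.exp (2 * Real.pi * γ.re) :=
        abs_exp_two_pi γ
      rcases lt_trichotomy γ.re 0 with hx | hx | hx
      · left
        rw [Set.mem_setOf_eq, key, habs]
        exact mul_lt_of_lt_one_left hQpos (Real.exp_lt_one_iff.mpr (by nlinarith [Real.pi_pos]))
      · exfalso
        apply hwm
        have hγeq : γ = γ₀ := by
          obtain ⟨h1, h2⟩ := hγ
          simp only [hα, hβ, hx, mul_zero, min_self, max_self, add_zero] at h1 h2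
          have him : γ.im = 1 / p := le_antisymm h2 h1
          apply Complex.ext
          · rw [hx, hre0]
          · rw [him, him0]
        rw [Set.mem_singleton_iff, hm]
        show moebius z₁ z₂ (Complex.exp (2 * Real.pi * γ)) =
          moebius z₁ z₂ (Complex.exp (2 * Real.pi * Complex.I / p))
        rw [hγeq, harg]
      · right
        rw [Set.mem_setOf_eq, key, habs]
        exact lt_mul_of_one_lt_left hQpos (Real.one_lt_exp_iff.mpr (by nlinarith [Real.pi_pos]))
    · rcases h with h | h
      · rw [h]; exact Or.inl hz₁U
      · rw [Set.mem_singleton_iff.mp h]; exact Or.inr hz₂V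
  have hUne : ((leaf z₁ z₂ p α β \ {m}) ∩ U).Nonempty :=
    ⟨z₁, ⟨Or.inr (Set.mem_insert _ _), fun h => hm1 (Set.mem_singleton_iff.mp h).symm⟩, hz₁U⟩
  have hVne : ((leaf z₁ z₂ p α β \ {m}) ∩ V).Nonempty :=
    ⟨z₂, ⟨Or.inr (Set.mem_insert_of_mem _ rfl), fun h => hm2 (Set.mem_singleton_iff.mp h).symm⟩, hz₂V⟩
  obtain ⟨w, -, hwU, hwV⟩ := hpc U V hUopen hVopen hcover hUne hVne
  simp only [hU, Set.mem_setOf_eq] at hwU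
  simp only [hV, Set.mem_setOf_eq] at hwV
  exact lt_asymm hwU hwV

end
end

section
/- Reduction step in the proof of the boundedness theorem: Let δ⁻ ≤ δ⁺ be real numbers and let α(x) := min(δ⁻x, δ⁺x), β(x) := max(δ⁻x, δ⁺x) for x ∈ ℝ. Let P > 1 and m > 1 be real numbers and γ ∈ ℂ. If 0 < 1/P + Re γ + α(Im γ) and 1/P + Re γ + β(Im γ) < 1, then there exists a real number p₀ with 1 < p₀ < m such that 0 < (P − p₀)/P − p₀·Re γ + α(−p₀·Im γ) and (P − p₀)/P − p₀·Re γ + β(−p₀·Im γ) < 1. -/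
/-- **Reduction step in the proof of the boundedness theorem.** Let `α(x) = min (δ⁻ x, δ⁺ x)`,
`β(x) = max (δ⁻ x, δ⁺ x)`, let `P > 1` and `m > 1` be real and `γ ∈ ℂ`. If
`0 < 1/P + Re γ + α(Im γ)` and `1/P + Re γ + β(Im γ) < 1`, then there is `p₀` with
`1 < p₀ < m`, `0 < (P - p₀)/P - p₀ Re γ + α(-p₀ Im γ)` and
`(P - p₀)/P - p₀ Re γ + β(-p₀ Im γ) < 1`. -/
theorem exists_p0_reduction (δminus δplus : ℝ) (hδ : δminus ≤ δplus)
    (α β : ℝ → ℝ)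
    (hα : ∀ x : ℝ, α x = min (δminus * x) (δplus * x))
    (hβ : ∀ x : ℝ, β x = max (δminus * x) (δplus * x))
    (P m : ℝ) (hP : 1 < P) (hm : 1 < m) (γ : ℂ)
    (h₁ : 0 < 1 / P + γ.re + α γ.im)
    (h₂ : 1 / P + γ.re + β γ.im < 1) :
    ∃ p₀ : ℝ, 1 < p₀ ∧ p₀ < m ∧
      0 < (P - p₀) / P - p₀ * γ.re + α (-p₀ * γ.im) ∧
      (P - p₀) / P - p₀ * γ.re + β (-p₀ * γ.im) < 1 := by
  set y := γ.im
  set B := 1 / P + γ.re + β y with hB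
  set C : ℝ := max B (1/2) with hC
  have hC0 : 0 < C := lt_of_lt_of_le (by norm_num) (le_max_right _ _)
  have hC1 : C < 1 := by
    rcases max_choice B (1/2) with h | h <;> rw [hC, h] <;> [exact h₂; norm_num]
  have hCinv : 1 < 1 / C := (one_lt_div hC0).mpr hC1
  set p := min ((1 + m) / 2) ((1 + 1 / C) / 2) with hp
  have hp1 : 1 < p := lt_min (by linarith) (by linarith)
  have hp0 : 0 < p := by linarith
  have hpm : p < m := lt_of_le_of_lt (min_le_left _ _) (by linarith)
  have hpC : p * C < 1 := by
    have h1 : p ≤ (1 + 1/C) / 2 := min_le_right _ _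
    have h2 : p < 1 / C := by linarith
    calc p * C < (1/C) * C := by exact mul_lt_mul_of_pos_right h2 hC0
    _ = 1 := by field_simp
  have hpB : p * B < 1 := lt_of_le_of_lt
    (mul_le_mul_of_nonneg_left (le_max_left _ _) (le_of_lt hp0)) hpC
  -- key identities
  have hαkey : α (-p * y) = -(p * β y) := by
    rw [hα, hβ]
    rcases le_total (δminus * y) (δplus * y) with h | h
    · rw [max_eq_right h, min_eq_right (by nlinarith [mul_le_mul_of_nonneg_left h hp0.le])]; ring
    · rw [max_eq_left h, min_eq_left (by nlinarith [mul_le_mul_of_nonneg_left h hp0.le])]; ring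
  have hβkey : β (-p * y) = -(p * α y) := by
    rw [hα, hβ]
    rcases le_total (δminus * y) (δplus * y) with h | h
    · rw [min_eq_left h, max_eq_left (by nlinarith [mul_le_mul_of_nonneg_left h hp0.le])]; ring
    · rw [min_eq_right h, max_eq_right (by nlinarith [mul_le_mul_of_nonneg_left h hp0.le])]; ring
  refine ⟨p, hp1, hpm, ?_, ?_⟩
  · have : (P - p) / P = 1 - p * (1/P) := by field_simp
    rw [hαkey, this]
    have : p * B < 1 := hpB
    rw [hB] at this
    nlinarith
  · have : (P - p) / P = 1 - p * (1/P) := by field_simp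
    rw [hβkey, this]
    nlinarith
end

section
/- Let δ⁻ ≤ δ⁺ be real numbers, let α(x) := min(δ⁻x, δ⁺x), β(x) := max(δ⁻x, δ⁺x) for x ∈ ℝ, and let p > 1 be a real number. Then 0 and 1 are not isolated points of the leaf L(0,1;p,α,β); that is, 0 is a cluster point of L(0,1;p,α,β) ∖ {0} and 1 is a cluster point of L(0,1;p,α,β) ∖ {1}. -/
open Filter in
/-- For `α(x) = min (δ⁻ x, δ⁺ x)`, `β(x) = max (δ⁻ x, δ⁺ x)` and `p > 1`, the points `0` and
`1` are not isolated points of the leaf `𝓛(0, 1; p, α, β)`: `0` is a cluster point of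
`𝓛 ∖ {0}` and `1` is a cluster point of `𝓛 ∖ {1}`. -/
theorem leaf_zero_one_not_isolated (δminus δplus : ℝ) (hδ : δminus ≤ δplus)
    (p : ℝ) (hp : 1 < p) :
    AccPt (0 : ℂ) (𝓟 (leaf 0 1 p (fun x => min (δminus * x) (δplus * x))
      (fun x => max (δminus * x) (δplus * x)))) ∧
    AccPt (1 : ℂ) (𝓟 (leaf 0 1 p (fun x => min (δminus * x) (δplus * x))
      (fun x => max (δminus * x) (δplus * x)))) := by
  have hπ : (0:ℝ) < 2 * Real.pi := by positivity
  set L := leaf 0 1 p (fun x => min (δminus * x) (δplus * x))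
      (fun x => max (δminus * x) (δplus * x)) with hL
  -- the curve point at parameter x
  set γ : ℝ → ℂ := fun x => ⟨x, 1/p + δminus * x⟩ with hγ
  set ζ : ℝ → ℂ := fun x => Complex.exp (2 * Real.pi * γ x) with hζ
  have habs : ∀ x, ‖ζ x‖ = Real.exp (2 * Real.pi * x) := by
    intro x
    rw [hζ, Complex.norm_exp]
    congr 1
    simp [Complex.mul_re, hγ]
  have hmem : ∀ x, ζ x / (ζ x - 1) ∈ L := by
    intro x
    left
    refine ⟨γ x, ⟨?_, ?_⟩, ?_⟩
    · simpa [hγ] using min_le_left (δminus * x) (δplus * x)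
    · simpa [hγ] using le_max_left (δminus * x) (δplus * x)
    · simp [moebius, hζ]
  constructor
  · rw [accPt_iff_nhds]
    intro U hU
    obtain ⟨ε, hε, hball⟩ := Metric.mem_nhds_iff.mp hU
    set r : ℝ := min (ε/4) (1/2) with hr
    have hr0 : 0 < r := by positivity
    have hr2 : r ≤ 1/2 := min_le_right _ _
    set x : ℝ := Real.log r / (2 * Real.pi) with hx
    have hexp : ‖ζ x‖ = r := by
      rw [habs, hx, mul_div_cancel₀ _ (ne_of_gt hπ), Real.exp_log hr0]
    have hsub : (1:ℝ)/2 ≤ ‖ζ x - 1‖ := by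
      calc (1:ℝ)/2 = 1 - 1/2 := by norm_num
        _ ≤ ‖(1:ℂ)‖ - ‖ζ x‖ := by
            rw [norm_one, hexp]; linarith
        _ ≤ ‖1 - ζ x‖ := by
            simpa using norm_sub_norm_le (1:ℂ) (ζ x)
        _ = ‖ζ x - 1‖ := by rw [← norm_neg]; ring_nf
    have hne1 : ζ x - 1 ≠ 0 := by
      intro h; rw [h] at hsub; simp at hsub; linarith
    refine ⟨ζ x / (ζ x - 1), ⟨hball ?_, hmem x⟩, ?_⟩
    · rw [Metric.mem_ball, dist_zero_right, norm_div, hexp]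
      calc r / ‖ζ x - 1‖ ≤ r / (1/2) :=
            div_le_div_of_nonneg_left hr0.le (by norm_num) hsub
        _ = 2 * r := by ring
        _ ≤ 2 * (ε/4) := by have := min_le_left (ε/4) (1/2:ℝ); linarith
        _ < ε := by linarith
    · exact div_ne_zero (Complex.exp_ne_zero _) hne1
  · rw [accPt_iff_nhds]
    intro U hU
    obtain ⟨ε, hε, hball⟩ := Metric.mem_nhds_iff.mp hU
    set R : ℝ := 1 + 2/ε with hR
    have hR0 : 0 < R := by positivity
    set x : ℝ := Real.log R / (2 * Real.pi) with hx
    have hexp : ‖ζ x‖ = R := by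
      rw [habs, hx, mul_div_cancel₀ _ (ne_of_gt hπ), Real.exp_log hR0]
    have hsub : 2/ε ≤ ‖ζ x - 1‖ := by
      calc 2/ε = R - 1 := by rw [hR]; ring
        _ = ‖ζ x‖ - ‖(1:ℂ)‖ := by rw [norm_one, hexp]
        _ ≤ ‖ζ x - 1‖ := norm_sub_norm_le _ _
    have hne1 : ζ x - 1 ≠ 0 := by
      intro h; rw [h] at hsub; simp at hsub
      have : (0:ℝ) < 2/ε := by positivity
      linarith
    have hdiff : ζ x / (ζ x - 1) - 1 = 1 / (ζ x - 1) := by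
      field_simp
      ring
    refine ⟨ζ x / (ζ x - 1), ⟨hball ?_, hmem x⟩, ?_⟩
    · rw [Metric.mem_ball, dist_eq_norm, hdiff, norm_div, norm_one]
      have h2ε : (0:ℝ) < 2/ε := by positivity
      calc 1 / ‖ζ x - 1‖ ≤ 1 / (2/ε) :=
            div_le_div_of_nonneg_left one_pos.le h2ε hsub
        _ = ε/2 := by field_simp
        _ < ε := by linarith
    · intro h
      apply hne1
      have : ζ x / (ζ x - 1) - 1 = 0 := by rw [h]; ring
      rw [hdiff] at this
      simpa using this
end
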